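/- Let (U, 𝕌) be a probability space, g: X×U → X a Borel map with ∫_U |g(x,u)|² d𝕌(u) ≤ L(1+|x|²) for some L > 0 and all x ∈ X, and define the probability vector field F[μ] := (π⁰, g)_♯(μ ⊗ 𝕌) ∈ P₂(TX) for μ ∈ P₂(X), where π⁰(x,u) = x. Let (Ω, P) be a probability space, X⁰ ∈ L²(Ω,P;X), τ > 0, N ∈ ℕ, and let V⁰,…,V^{N−1}: Ω → U be random variables with (Vᵏ)_♯P = 𝕌 for every k and such that X⁰, V⁰,…,V^{N−1} are independent; define recursively X^{n+1} := Xⁿ + τ g(Xⁿ, Vⁿ). Let M⁰ := (X⁰)_♯P and M^{n+1} := exp^τ_♯F[Mⁿ], and let α_τ ∈ P(X^{N+1}) be the multi-step plan associated with (F[Mⁿ])_{0≤n≤N−1}. Then: (1) (Xⁿ)_♯P = Mⁿ for every 0 ≤ n ≤ N; (2) (X⁰, X¹, …, X^N)_♯P = α_τ; consequently, the law of the piecewise-affine interpolation G(X⁰,…,X^N) equals η_τ := G_♯α_τ. -/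

import Mathlib

open MeasureTheory ProbabilityTheory
open scoped ENNReal

variable {X : Type*} [NormedAddCommGroup X] [InnerProductSpace ℝ X]
  [CompleteSpace X] [SecondCountableTopology X] [MeasurableSpace X] [BorelSpace X]

/-- The multi-step plans. -/
noncomputable def mstep (T0 : Measure (X × X)) (κ : ℕ → Kernel X X) :
    (n : ℕ) → Measure (Fin (n + 2) → X)
  | 0 => T0.map (fun p => ![p.1, p.2])
  | n + 1 => (mstep T0 κ n).bind
      (fun xs => ((κ (n + 1)) (xs (Fin.last (n + 1)))).map (Fin.snoc xs))

section Aux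

variable {Ω A B C : Type*} [MeasurableSpace Ω] [MeasurableSpace A] [MeasurableSpace B]
  [MeasurableSpace C] {P : Measure Ω} [IsProbabilityMeasure P]

/-- If `a ⫫ (b, c)` and `b ⫫ c`, then `(a, b) ⫫ c`. -/
lemma indepFun_prod_left_of_indepFun {a : Ω → A} {b : Ω → B} {c : Ω → C}
    (ha : Measurable a) (hb : Measurable b) (hc : Measurable c)
    (h1 : IndepFun a (fun ω => (b ω, c ω)) P) (h2 : IndepFun b c P) :
    IndepFun (fun ω => (a ω, b ω)) c P := by
  have hbc : Measurable fun ω => (b ω, c ω) := hb.prodMk hc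
  have hab : IndepFun a b P := h1.comp measurable_id measurable_fst
  haveI : IsProbabilityMeasure (P.map a) := Measure.isProbabilityMeasure_map ha.aemeasurable
  haveI : IsProbabilityMeasure (P.map b) := Measure.isProbabilityMeasure_map hb.aemeasurable
  haveI : IsProbabilityMeasure (P.map c) := Measure.isProbabilityMeasure_map hc.aemeasurable
  rw [indepFun_iff_map_prod_eq_prod_map_map (ha.prodMk hb).aemeasurable hc.aemeasurable]
  have e1 : P.map (fun ω => (a ω, (b ω, c ω)))
      = (P.map a).prod ((P.map b).prod (P.map c)) := by
    rw [(indepFun_iff_map_prod_eq_prod_map_map ha.aemeasurable hbc.aemeasurable).mp h1,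
      (indepFun_iff_map_prod_eq_prod_map_map hb.aemeasurable hc.aemeasurable).mp h2]
  have e2 : P.map (fun ω => (a ω, b ω)) = (P.map a).prod (P.map b) :=
    (indepFun_iff_map_prod_eq_prod_map_map ha.aemeasurable hb.aemeasurable).mp hab
  have e3 : P.map (fun ω => ((a ω, b ω), c ω))
      = (P.map (fun ω => (a ω, (b ω, c ω)))).map
          (MeasurableEquiv.prodAssoc (α := A) (β := B) (γ := C)).symm := by
    rw [Measure.map_map (MeasurableEquiv.prodAssoc.symm.measurable) (ha.prodMk hbc)]
    rfl
  rw [e3, e1, ← (measurePreserving_prodAssoc (P.map a) (P.map b) (P.map c)).map_eq,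
    MeasurableEquiv.map_symm_map, e2]

/-- The key independence fact: `(X0, V_0, …, V_{n-1}) ⫫ V_n`. -/
lemma indep_init_prefix {U XT : Type*} [MeasurableSpace U] [MeasurableSpace XT]
    {K : ℕ} {V : Fin (K + 1) → Ω → U} (hVm : ∀ k, Measurable (V k))
    (hViid : iIndepFun V P)
    {X0 : Ω → XT} (hX0m : Measurable X0)
    (hindep : IndepFun X0 (fun ω (k : Fin (K + 1)) => V k ω) P)
    (n : ℕ) (hn : n < K + 1) :
    IndepFun (fun ω => (X0 ω, fun i : Fin n => V (Fin.castLE hn.le i) ω))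
      (V ⟨n, hn⟩) P := by
  have hVt : Measurable (fun ω (k : Fin (K + 1)) => V k ω) :=
    measurable_pi_lambda _ fun k => hVm k
  set S : Finset (Fin (K + 1)) := Finset.image (Fin.castLE hn.le) Finset.univ with hS
  set T : Finset (Fin (K + 1)) := {⟨n, hn⟩} with hT
  have hST : Disjoint S T := by
    rw [Finset.disjoint_left]
    intro a haS haT
    simp only [hS, Finset.mem_image, Finset.mem_univ, true_and] at haS
    simp only [hT, Finset.mem_singleton] at haT
    obtain ⟨i, rfl⟩ := haS
    have hval : ((Fin.castLE hn.le i : Fin (K+1)) : ℕ) = n := by rw [haT]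
    simp only [Fin.coe_castLE] at hval
    omega
  have hfin := hViid.indepFun_finset S T hST hVm
  -- reindexing maps
  have hb : IndepFun (fun ω => fun i : Fin n => V (Fin.castLE hn.le i) ω) (V ⟨n, hn⟩) P := by
    have hφ : Measurable (fun (v : S → U) (i : Fin n) =>
        v ⟨Fin.castLE hn.le i, by simp [hS]⟩) :=
      measurable_pi_lambda _ fun i => measurable_pi_apply _
    have hψ : Measurable (fun (v : T → U) => v ⟨⟨n, hn⟩, by simp [hT]⟩) :=
      measurable_pi_apply _
    exact hfin.comp hφ hψ
  have ha : IndepFun X0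
      (fun ω => ((fun i : Fin n => V (Fin.castLE hn.le i) ω), V ⟨n, hn⟩ ω)) P := by
    have hθ : Measurable (fun v : Fin (K + 1) → U =>
        ((fun i : Fin n => v (Fin.castLE hn.le i)), v ⟨n, hn⟩)) :=
      ((measurable_pi_lambda _ fun i => measurable_pi_apply _).prodMk (measurable_pi_apply _))
    exact hindep.comp measurable_id hθ
  exact indepFun_prod_left_of_indepFun hX0m
    (measurable_pi_lambda _ fun i => hVm _) (hVm _) ha hb

end Aux

/-- Stochastic explicit Euler iterations
`X^{n+1} = Xⁿ + τ g(Xⁿ, Vⁿ)`, with `(Vᵏ)` i.i.d. of law `𝕌` independent of `X⁰`,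
realize at the level of laws the Explicit Euler scheme for the PVF
`F[μ] = (π⁰, g)_♯(μ ⊗ 𝕌)` : with `N = K + 1`, `Mⁿ⁺¹ = exp^τ_♯F[Mⁿ]`, `M⁰ = (X⁰)_♯P`
and `α_τ` the associated multi-step plan (built from disintegration kernels `κ n` of
the single-step plans), one has (1) `(Xⁿ)_♯P = Mⁿ` for all `n ≤ N` and
(2) `(X⁰,…,X^N)_♯P = α_τ`; consequently (3) the law of the piecewise-affine
interpolation `G(X⁰,…,X^N)` equals `η_τ = G_♯α_τ`. -/
theorem stmt14 (U : Type*) [MeasurableSpace U] (𝕌 : Measure U) [IsProbabilityMeasure 𝕌]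
    (g : X × U → X) (hg : Measurable g) (L : ℝ) (hL : 0 < L)
    (hgrowth : ∀ x : X, (∫ u, ‖g (x, u)‖ ^ 2 ∂𝕌) ≤ L * (1 + ‖x‖ ^ 2))
    (Ω : Type*) [MeasurableSpace Ω] (P : Measure Ω) [IsProbabilityMeasure P]
    (X0 : Ω → X) (hX0m : Measurable X0) (hX0L2 : Integrable (fun ω => ‖X0 ω‖ ^ 2) P)
    (τ : ℝ) (hτ : 0 < τ) (K : ℕ)
    (V : Fin (K + 1) → Ω → U) (hVm : ∀ k, Measurable (V k))
    (hVlaw : ∀ k, P.map (V k) = 𝕌)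
    (hViid : iIndepFun V P)
    (hindep : IndepFun X0 (fun ω (k : Fin (K + 1)) => V k ω) P)
    (XX : ℕ → Ω → X) (hXX0 : XX 0 = X0)
    (hXXrec : ∀ n, (hn : n < K + 1) →
      XX (n + 1) = fun ω => XX n ω + τ • g (XX n ω, V ⟨n, hn⟩ ω))
    (M : ℕ → Measure X) (hM0 : M 0 = P.map X0)
    (hMrec : ∀ n, M (n + 1)
        = ((M n).prod 𝕌).map (fun p : X × U => p.1 + τ • g p))
    (κ : ℕ → Kernel X X) (hκMarkov : ∀ n, IsMarkovKernel (κ n))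
    (hdis : ∀ n, (M n).compProd (κ n)
        = ((M n).prod 𝕌).map (fun p : X × U => (p.1, p.1 + τ • g p))) :
    (∀ n ≤ K + 1, P.map (XX n) = M n) ∧
    (P.map (fun ω => fun i : Fin (K + 2) => XX i ω)
        = mstep (((M 0).prod 𝕌).map (fun p : X × U => (p.1, p.1 + τ • g p))) κ K) ∧
    (∀ {Tend : ℝ} (hTend : 0 ≤ Tend),
      ∀ [MeasurableSpace C(Set.Icc (0:ℝ) Tend, X)],
      ∀ G : (Fin (K + 2) → X) → C(Set.Icc (0:ℝ) Tend, X), Measurable G →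
        P.map (fun ω => G (fun i : Fin (K + 2) => XX i ω))
          = (mstep (((M 0).prod 𝕌).map (fun p : X × U => (p.1, p.1 + τ • g p))) κ K).map G) := by
  haveI : Nonempty X := ⟨0⟩
  set F : X × U → X := fun p => p.1 + τ • g p with hFdef
  have hF : Measurable F := measurable_fst.add (hg.const_smul τ)
  set Gm : X × U → X × X := fun p => (p.1, F p) with hGmdef
  have hGm : Measurable Gm := measurable_fst.prodMk hF
  -- the measures M n are probability measures
  have hMprob : ∀ n, IsProbabilityMeasure (M n) := by
    intro n
    induction n with
    | zero => rw [hM0]; exact Measure.isProbabilityMeasure_map hX0m.aemeasurable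
    | succ n ih =>
      rw [hMrec n]
      haveI := ih
      exact Measure.isProbabilityMeasure_map hF.aemeasurable
  -- representation of `XX n` as a measurable function of `(X0, V_0, …, V_{n-1})`
  have rep : ∀ n : ℕ, ∀ hn : n ≤ K + 1, ∃ Φ : X × (Fin n → U) → X, Measurable Φ ∧
      ∀ ω, XX n ω = Φ (X0 ω, fun i : Fin n => V (Fin.castLE hn i) ω) := by
    intro n
    induction n with
    | zero =>
      exact fun _ => ⟨Prod.fst, measurable_fst, fun ω => by rw [hXX0]⟩
    | succ n ih =>
      intro hn1
      have hn : n < K + 1 := by omega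
      obtain ⟨Φ, hΦm, hΦ⟩ := ih hn.le
      refine ⟨fun p => Φ (p.1, fun i => p.2 i.castSucc)
          + τ • g (Φ (p.1, fun i => p.2 i.castSucc), p.2 (Fin.last n)), ?_, ?_⟩
      · have h1 : Measurable fun p : X × (Fin (n + 1) → U) =>
            Φ (p.1, fun i => p.2 i.castSucc) :=
          hΦm.comp (measurable_fst.prodMk
            (measurable_pi_lambda _ fun i => (measurable_pi_apply _).comp measurable_snd))
        exact h1.add ((hg.comp
          (h1.prodMk ((measurable_pi_apply _).comp measurable_snd))).const_smul τ)
      · intro ω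
        rw [hXXrec n hn]
        simp only
        rw [hΦ ω]
        rfl
  -- measurability of the `XX n`
  have hXXm : ∀ n ≤ K + 1, Measurable (XX n) := by
    intro n hn
    obtain ⟨Φ, hΦm, hΦ⟩ := rep n hn
    have : XX n = fun ω => Φ (X0 ω, fun i : Fin n => V (Fin.castLE hn i) ω) := funext hΦ
    rw [this]
    exact hΦm.comp (hX0m.prodMk (measurable_pi_lambda _ fun i => hVm _))
  -- Part (1): the laws of the iterates
  have law : ∀ n ≤ K + 1, P.map (XX n) = M n := by
    intro n
    induction n with
    | zero => intro _; rw [hXX0, hM0]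
    | succ n ih =>
      intro hn1
      have hn : n < K + 1 := by omega
      obtain ⟨Φ, hΦm, hΦ⟩ := rep n hn.le
      -- independence of XX n and V n
      have hXVind : IndepFun (XX n) (V ⟨n, hn⟩) P := by
        have h := (indep_init_prefix hVm hViid hX0m hindep n hn).comp hΦm measurable_id
        have hXe : (Φ ∘ fun ω => (X0 ω, fun i : Fin n => V (Fin.castLE hn.le i) ω)) = XX n := by
          funext ω; exact (hΦ ω).symm
        rwa [hXe] at h
      have hpair : P.map (fun ω => (XX n ω, V ⟨n, hn⟩ ω)) = (M n).prod 𝕌 := by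
        rw [(indepFun_iff_map_prod_eq_prod_map_map (hXXm n hn.le).aemeasurable
          (hVm _).aemeasurable).mp hXVind, ih hn.le, hVlaw]
      rw [hXXrec n hn]
      have : (fun ω => XX n ω + τ • g (XX n ω, V ⟨n, hn⟩ ω))
          = F ∘ (fun ω => (XX n ω, V ⟨n, hn⟩ ω)) := rfl
      rw [this, ← Measure.map_map hF ((hXXm n hn.le).prodMk (hVm _)), hpair, ← hMrec]
  refine ⟨law, ?_⟩
  set T0 : Measure (X × X) := ((M 0).prod 𝕌).map Gm with hT0def
  -- Part (2)
  have part2 : ∀ n ≤ K, P.map (fun ω => fun i : Fin (n + 2) => XX i ω) = mstep T0 κ n := by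
    intro n
    induction n with
    | zero =>
      intro _
      have h0 : (0 : ℕ) < K + 1 := by omega
      -- law of the pair (XX 0, V 0)
      have hXVind : IndepFun (XX 0) (V ⟨0, h0⟩) P := by
        have h := (indep_init_prefix hVm hViid hX0m hindep 0 h0).comp measurable_fst
          measurable_id
        have hXe : (Prod.fst ∘ fun ω =>
            ((X0 ω, fun i : Fin 0 => V (Fin.castLE h0.le i) ω))) = XX 0 := by
          funext ω; rw [hXX0]; rfl
        rwa [hXe] at h
      have hpair : P.map (fun ω => (XX 0 ω, V ⟨0, h0⟩ ω)) = (M 0).prod 𝕌 := by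
        rw [(indepFun_iff_map_prod_eq_prod_map_map (hXXm 0 (by omega)).aemeasurable
          (hVm _).aemeasurable).mp hXVind, law 0 (by omega), hVlaw]
      have hx01 : (fun ω => fun i : Fin 2 => XX i ω)
          = (fun p : X × X => ![p.1, p.2]) ∘ (fun ω => (XX 0 ω, XX 1 ω)) := by
        funext ω
        funext i
        fin_cases i <;> simp
      have hx1 : (fun ω => (XX 0 ω, XX 1 ω)) = Gm ∘ (fun ω => (XX 0 ω, V ⟨0, h0⟩ ω)) := by
        funext ω
        rw [hXXrec 0 h0]
        rfl
      have hm2 : Measurable fun p : X × X => ![p.1, p.2] := by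
        apply measurable_pi_lambda
        intro i
        fin_cases i
        · simpa using measurable_fst
        · simpa using measurable_snd
      show P.map (fun ω => fun i : Fin 2 => XX i ω) = T0.map (fun p => ![p.1, p.2])
      rw [hx01, ← Measure.map_map hm2 ((hXXm 0 (by omega)).prodMk ((hXXm 1 (by omega)))),
        hx1, ← Measure.map_map hGm ((hXXm 0 (by omega)).prodMk (hVm _)), hpair]
    | succ n ih =>
      intro hnK
      have IH := ih (by omega)
      have hn2 : n + 1 < K + 1 := by omega
      set ρ : Measure (Fin (n + 2) → X) := mstep T0 κ n with hρdef
      set lastf : (Fin (n + 2) → X) → X := fun xs => xs (Fin.last (n + 1)) with hlastdef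
      have hlast : Measurable lastf := measurable_pi_apply _
      set ξ : Ω → (Fin (n + 2) → X) := fun ω => fun i : Fin (n + 2) => XX i ω with hξdef
      have hξm : Measurable ξ :=
        measurable_pi_lambda _ fun i => hXXm i (by omega)
      have hξm' : Measurable (fun ω => fun i : Fin (n + 3) => XX i ω) :=
        measurable_pi_lambda _ fun i => hXXm i (by omega)
      haveI hρprob : IsProbabilityMeasure ρ := by
        rw [← IH]; exact Measure.isProbabilityMeasure_map hξm.aemeasurable
      haveI := hMprob (n + 1)
      haveI := hMprob (n + 2)
      haveI := hκMarkov (n + 1)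
      -- the explicit kernel
      set k : Kernel X X := Kernel.map (Kernel.id ×ₖ Kernel.const X 𝕌) F with hkdef
      have kapp : ∀ x, k x = 𝕌.map (fun u => F (x, u)) := by
        intro x
        rw [hkdef, Kernel.map_apply _ hF, Kernel.prod_apply, Kernel.id_apply,
          Kernel.const_apply, Measure.dirac_prod,
          Measure.map_map hF measurable_prodMk_left]
        rfl
      haveI hkMarkov : IsMarkovKernel k := by
        refine ⟨fun x => ⟨?_⟩⟩
        rw [kapp x, Measure.map_apply (show Measurable fun u => F (x, u) from hF.comp measurable_prodMk_left) MeasurableSet.univ]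
        simp
      -- `M (n+1) ⊗ₘ k` equals the one-step plan measure
      set ρ' : Measure (X × X) := ((M (n + 1)).prod 𝕌).map Gm with hρ'def
      haveI : IsProbabilityMeasure ρ' := Measure.isProbabilityMeasure_map hGm.aemeasurable
      have hcompk : (M (n + 1)).compProd k = ρ' := by
        ext S hS
        rw [Measure.compProd_apply hS, hρ'def, Measure.map_apply hGm hS,
          Measure.prod_apply (hGm hS)]
        refine lintegral_congr fun x => ?_
        rw [kapp x, Measure.map_apply (show Measurable fun u => F (x, u) from
          hF.comp measurable_prodMk_left) (measurable_prodMk_left hS)]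
        rfl
      have hρ'fst : ρ'.fst = M (n + 1) := by
        ext s hs
        rw [Measure.fst_apply hs, hρ'def, Measure.map_apply hGm (measurable_fst hs)]
        have : Gm ⁻¹' (Prod.fst ⁻¹' s) = Prod.fst ⁻¹' s := rfl
        rw [this, ← Set.prod_univ, Measure.prod_prod, measure_univ, mul_one]
      -- a.e. equality of `κ (n+1)` and `k`
      have hae : ∀ᵐ x ∂(M (n + 1)), κ (n + 1) x = k x := by
        have h1 : ρ' = ρ'.fst.compProd (κ (n + 1)) := by
          rw [hρ'fst]; exact (hdis (n + 1)).symm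
        have h2 : ρ' = ρ'.fst.compProd k := by rw [hρ'fst]; exact hcompk.symm
        have e1 := eq_condKernel_of_measure_eq_compProd (κ (n + 1)) h1
        have e2 := eq_condKernel_of_measure_eq_compProd k h2
        rw [hρ'fst] at e1 e2
        filter_upwards [e1, e2] with x hx1 hx2
        rw [hx1, hx2]
      -- transfer to `ρ` via the last coordinate
      have hρlast : ρ.map lastf = M (n + 1) := by
        rw [← IH, Measure.map_map hlast hξm]
        have : lastf ∘ ξ = XX (n + 1) := by
          funext ω
          show XX ((Fin.last (n + 1) : Fin (n + 2)) : ℕ) ω = XX (n + 1) ω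
          rw [Fin.val_last]
        rw [this, law (n + 1) (by omega)]
      have haeρ : ∀ᵐ xs ∂ρ, κ (n + 1) (lastf xs) = k (lastf xs) := by
        rw [← hρlast] at hae
        exact ae_of_ae_map hlast.aemeasurable hae
      -- snoc kernels
      have hsn : Measurable (fun p : (Fin (n + 2) → X) × X => (Fin.snoc p.1 p.2 :
          Fin (n + 3) → X)) := by
        apply measurable_pi_lambda
        intro i
        refine Fin.lastCases ?_ ?_ i
        · simpa only [Fin.snoc_last] using measurable_snd
        · intro j
          simp only [Fin.snoc_castSucc]
          exact (measurable_pi_apply j).comp measurable_fst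
      have hsnoc_fix : ∀ xs : Fin (n + 2) → X,
          Measurable (@Fin.snoc (n + 2) (fun _ => X) xs) := by
        intro xs
        exact hsn.comp measurable_prodMk_left
      set κs : Kernel (Fin (n + 2) → X) (Fin (n + 3) → X) :=
        Kernel.map (Kernel.id ×ₖ (κ (n + 1)).comap lastf hlast)
          (fun p => Fin.snoc p.1 p.2) with hκsdef
      set ks : Kernel (Fin (n + 2) → X) (Fin (n + 3) → X) :=
        Kernel.map (Kernel.id ×ₖ k.comap lastf hlast)
          (fun p => Fin.snoc p.1 p.2) with hksdef
      have κsapp : ∀ xs, κs xs = (κ (n + 1) (lastf xs)).map (Fin.snoc xs) := by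
        intro xs
        rw [hκsdef, Kernel.map_apply _ hsn, Kernel.prod_apply, Kernel.id_apply,
          Kernel.comap_apply, Measure.dirac_prod,
          Measure.map_map hsn measurable_prodMk_left]
        rfl
      have ksapp : ∀ xs, ks xs = (k (lastf xs)).map (Fin.snoc xs) := by
        intro xs
        rw [hksdef, Kernel.map_apply _ hsn, Kernel.prod_apply, Kernel.id_apply,
          Kernel.comap_apply, Measure.dirac_prod,
          Measure.map_map hsn measurable_prodMk_left]
        rfl
      -- the bind function is the kernel κs
      have hbindf : (fun xs : Fin (n + 2) → X =>
          ((κ (n + 1)) (xs (Fin.last (n + 1)))).map (Fin.snoc xs)) = ⇑κs := by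
        funext xs; rw [κsapp xs]
      -- law of the pair (ξ, V (n+1))
      choose Φ hΦm hΦ using fun (i : Fin (n + 2)) => rep i (by omega)
      set Ψ : X × (Fin (n + 1) → U) → (Fin (n + 2) → X) := fun p i =>
        Φ i (p.1, fun j : Fin (i : ℕ) => p.2 ⟨j, by omega⟩) with hΨdef
      have hΨm : Measurable Ψ := by
        apply measurable_pi_lambda
        intro i
        exact (hΦm i).comp (measurable_fst.prodMk
          (measurable_pi_lambda _ fun j => (measurable_pi_apply _).comp measurable_snd))
      have hξrep : ξ = Ψ ∘ (fun ω =>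
          (X0 ω, fun i : Fin (n + 1) => V (Fin.castLE hn2.le i) ω)) := by
        funext ω
        funext i
        show XX i ω = Φ i (X0 ω, fun j : Fin (i : ℕ) => V (Fin.castLE hn2.le ⟨j, by omega⟩) ω)
        rw [hΦ i ω]
        congr 1
      have hξind : IndepFun ξ (V ⟨n + 1, hn2⟩) P := by
        have h := (indep_init_prefix hVm hViid hX0m hindep (n + 1) hn2).comp hΨm measurable_id
        rwa [← hξrep] at h
      have hpair : P.map (fun ω => (ξ ω, V ⟨n + 1, hn2⟩ ω)) = ρ.prod 𝕌 := by
        rw [(indepFun_iff_map_prod_eq_prod_map_map hξm.aemeasurable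
          (hVm _).aemeasurable).mp hξind, IH, hVlaw]
      -- the (n+3)-tuple as a function of (ξ, V (n+1))
      set Θ : (Fin (n + 2) → X) × U → (Fin (n + 3) → X) :=
        fun q => Fin.snoc q.1 (F (lastf q.1, q.2)) with hΘdef
      have hΘm : Measurable Θ :=
        hsn.comp (measurable_fst.prodMk
          (hF.comp ((hlast.comp measurable_fst).prodMk measurable_snd)))
      have htuple : (fun ω => fun i : Fin (n + 3) => XX i ω)
          = Θ ∘ (fun ω => (ξ ω, V ⟨n + 1, hn2⟩ ω)) := by
        funext ω
        funext i
        simp only [Function.comp_apply, hΘdef]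
        have hlx : lastf (ξ ω) = XX (n + 1) ω := by
          show XX ((Fin.last (n + 1) : Fin (n + 2)) : ℕ) ω = XX (n + 1) ω
          rw [Fin.val_last]
        have hxn2 : F (lastf (ξ ω), V ⟨n + 1, hn2⟩ ω) = XX (n + 2) ω := by
          rw [hlx, hXXrec (n + 1) hn2]
        rw [hxn2]
        refine Fin.lastCases ?_ ?_ i
        · rw [Fin.snoc_last, Fin.val_last]
        · intro j
          rw [Fin.snoc_castSucc]
          show XX ((Fin.castSucc j : Fin (n + 3)) : ℕ) ω = XX j ω
          rw [Fin.coe_castSucc]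
      -- conclude
      show P.map (fun ω => fun i : Fin (n + 3) => XX i ω)
          = ρ.bind (fun xs => ((κ (n + 1)) (xs (Fin.last (n + 1)))).map (Fin.snoc xs))
      rw [hbindf, htuple,
        ← Measure.map_map hΘm (hξm.prodMk (hVm _)), hpair]
      ext S hS
      rw [Measure.bind_apply hS (Kernel.measurable κs).aemeasurable,
        Measure.map_apply hΘm hS, Measure.prod_apply (hΘm hS)]
      refine lintegral_congr_ae ?_
      filter_upwards [haeρ] with xs hxs
      rw [κsapp xs, hxs, Measure.map_apply (hsnoc_fix xs) hS, kapp (lastf xs),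
        Measure.map_apply (show Measurable fun u => F (lastf xs, u) from
          hF.comp measurable_prodMk_left) ((hsnoc_fix xs) hS)]
      rfl
  refine ⟨part2 K le_rfl, ?_⟩
  intro Tend hTend _ G hGmeas
  rw [← part2 K le_rfl, Measure.map_map hGmeas
    (measurable_pi_lambda _ fun i => hXXm i (by omega))]
  rfl
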